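/- For every ε > 0 there exists N such that for all integers n ≥ N, the n-th perfect power a_n satisfies |a_n - n^2 + 2 n^{5/3}| ≤ ε n^{5/3}. Equivalently, a_n = n^2 - (2 + o(1)) n^{5/3} as n → ∞. -/

import Mathlib

/-- A perfect power: an integer of the form `m^k` with `m ≥ 1` and `k ≥ 2`. -/
def IsPerfectPower (n : ℕ) : Prop := ∃ m k : ℕ, 1 ≤ m ∧ 2 ≤ k ∧ n = m ^ k

open Finset


open Classical in
noncomputable def ppCount (x : ℕ) : ℕ := ((Finset.Icc 1 x).filter IsPerfectPower).card

/-- `nrt k x` is the integer k-th root of x. -/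
def nrt (k x : ℕ) : ℕ := Nat.findGreatest (fun b => b ^ k ≤ x) x

lemma nrt_pow_le (k x : ℕ) (hk : 0 < k) : (nrt k x) ^ k ≤ x := by
  have h0 : (0:ℕ) ^ k ≤ x := by rw [Nat.zero_pow hk]; exact Nat.zero_le x
  exact Nat.findGreatest_spec (P := fun b => b ^ k ≤ x) (Nat.zero_le x) h0

lemma nrt_le (k x : ℕ) : nrt k x ≤ x := Nat.findGreatest_le x

lemma lt_nrt_succ_pow (k x : ℕ) (hk : 0 < k) : x < (nrt k x + 1) ^ k := by
  rcases le_or_gt (nrt k x + 1) x with h | h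
  · have := Nat.findGreatest_is_greatest (P := fun b => b ^ k ≤ x) (n := x)
      (Nat.lt_succ_self _) h
    simp only [nrt, Nat.succ_eq_add_one, not_le] at this
    simp only [nrt]
    omega
  · have h2 : nrt k x + 1 ≤ (nrt k x + 1) ^ k := Nat.le_self_pow hk.ne' _
    omega

lemma le_nrt {k x b : ℕ} (hk : 0 < k) (h : b ^ k ≤ x) : b ≤ nrt k x :=
  Nat.le_findGreatest (le_trans (Nat.le_self_pow hk.ne' b) h) h
section P2
variable (a : ℕ → ℕ)
    (hmono : ∀ m n : ℕ, 1 ≤ m → m < n → a m < a n)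
    (hrange : ∀ N : ℕ, IsPerfectPower N ↔ ∃ n : ℕ, 1 ≤ n ∧ a n = N)

include hrange in
lemma a_pp {n : ℕ} (hn : 1 ≤ n) : IsPerfectPower (a n) :=
  (hrange (a n)).mpr ⟨n, hn, rfl⟩

include hrange in
lemma a_pos {n : ℕ} (hn : 1 ≤ n) : 1 ≤ a n := by
  obtain ⟨m, k, hm, hk, he⟩ := a_pp a hrange hn
  exact he ▸ Nat.one_le_pow _ _ hm

include hmono hrange in
lemma count_a_eq {n : ℕ} (hn : 1 ≤ n) : ppCount (a n) = n := by
  classical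
  have hmono' : ∀ {p q : ℕ}, 1 ≤ p → p ≤ q → a p ≤ a q := by
    intro p q hp hpq
    rcases eq_or_lt_of_le hpq with rfl | h
    · exact le_rfl
    · exact (hmono p q hp h).le
  have hset : (Finset.Icc 1 (a n)).filter IsPerfectPower = (Finset.Icc 1 n).image a := by
    ext N
    simp only [Finset.mem_filter, Finset.mem_Icc, Finset.mem_image]
    constructor
    · rintro ⟨⟨h1, h2⟩, hpp⟩
      obtain ⟨m, hm, rfl⟩ := (hrange N).mp hpp
      refine ⟨m, ⟨hm, ?_⟩, rfl⟩
      by_contra h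
      exact absurd (hmono n m hn (by omega)) (by omega)
    · rintro ⟨m, ⟨hm1, hm2⟩, rfl⟩
      exact ⟨⟨a_pos a hrange hm1, hmono' hm1 hm2⟩, a_pp a hrange hm1⟩
  rw [ppCount, hset, Finset.card_image_of_injOn, Nat.card_Icc]
  · omega
  · intro p hp q hq hpq
    simp only [Finset.coe_Icc, Set.mem_Icc] at hp hq
    by_contra h
    rcases Nat.lt_or_ge p q with h1 | h1
    · exact absurd hpq (hmono p q hp.1 h1).ne
    · exact absurd hpq.symm (hmono q p hq.1 (by omega)).ne

end P2
lemma sq_of_cube_eq_sq {i j : ℕ} (hi : 0 < i) (h : i ^ 3 = j ^ 2) : ∃ b, i = b ^ 2 := by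
  have hj : 0 < j := by
    rcases Nat.eq_zero_or_pos j with rfl | h'
    · simp at h; omega
    · exact h'
  set d := Nat.gcd i j with hd
  have hd0 : 0 < d := Nat.gcd_pos_of_pos_left _ hi
  obtain ⟨A, hA⟩ : d ∣ i := Nat.gcd_dvd_left i j
  obtain ⟨B, hB⟩ : d ∣ j := Nat.gcd_dvd_right i j
  have hcop : Nat.Coprime A B := by
    have h1 : i / d = A := by rw [hA]; exact Nat.mul_div_cancel_left _ hd0
    have h2 : j / d = B := by rw [hB]; exact Nat.mul_div_cancel_left _ hd0
    have := Nat.coprime_div_gcd_div_gcd (m := i) (n := j) hd0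
    rwa [← hd, h1, h2] at this
  have key : d * A ^ 3 = B ^ 2 := by
    have h2 : (d * A) ^ 3 = (d * B) ^ 2 := by rw [← hA, ← hB]; exact h
    have h3 : d ^ 2 * (d * A ^ 3) = d ^ 2 * B ^ 2 := by ring_nf; ring_nf at h2; linarith
    exact Nat.eq_of_mul_eq_mul_left (by positivity) h3
  have hA3 : A ^ 3 ∣ B ^ 2 := ⟨d, by rw [← key]; ring⟩
  have hA1 : A = 1 := by
    have hc : Nat.Coprime (A ^ 3) (B ^ 2) := Nat.Coprime.pow 3 2 hcop
    have h1 : A ^ 3 = 1 := Nat.eq_one_of_dvd_coprimes hc (dvd_refl _) hA3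
    nlinarith [h1, sq_nonneg A]
  refine ⟨B, ?_⟩
  rw [hA, hA1, mul_one, ← key, hA1]
  ring
section Counting
open Classical

noncomputable def powSet (k x : ℕ) : Finset ℕ := (Finset.Icc 1 (nrt k x)).image (· ^ k)

lemma powSet_card (k x : ℕ) (hk : 1 ≤ k) : (powSet k x).card = nrt k x := by
  rw [powSet, Finset.card_image_of_injective _ (Nat.pow_left_injective (by omega)), Nat.card_Icc]
  omega

lemma powSet_subset (k x : ℕ) (hk : 2 ≤ k) :
    powSet k x ⊆ (Finset.Icc 1 x).filter IsPerfectPower := by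
  intro N hN
  simp only [powSet, Finset.mem_image, Finset.mem_Icc] at hN
  obtain ⟨j, ⟨hj1, hj2⟩, rfl⟩ := hN
  simp only [Finset.mem_filter, Finset.mem_Icc]
  refine ⟨⟨Nat.one_le_pow _ _ hj1, ?_⟩, j, k, hj1, hk, rfl⟩
  calc j ^ k ≤ (nrt k x) ^ k := Nat.pow_le_pow_left hj2 k
  _ ≤ x := nrt_pow_le k x (by omega)

lemma mem_powSet {k x b : ℕ} (hk : 1 ≤ k) (hb : 1 ≤ b) (h : b ^ k ≤ x) :
    b ^ k ∈ powSet k x := by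
  simp only [powSet, Finset.mem_image, Finset.mem_Icc]
  exact ⟨b, ⟨hb, le_nrt (by omega) h⟩, rfl⟩

lemma count_ge (x : ℕ) : nrt 2 x + nrt 3 x ≤ ppCount x + nrt 6 x := by
  have hsub : powSet 2 x ∪ powSet 3 x ⊆ (Finset.Icc 1 x).filter IsPerfectPower :=
    Finset.union_subset (powSet_subset 2 x le_rfl) (powSet_subset 3 x (by omega))
  have hint : powSet 2 x ∩ powSet 3 x ⊆ powSet 6 x := by
    intro y hy
    simp only [Finset.mem_inter, powSet, Finset.mem_image, Finset.mem_Icc] at hy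
    obtain ⟨⟨j, ⟨hj1, hj2⟩, hj⟩, ⟨i, ⟨hi1, hi2⟩, hi⟩⟩ := hy
    obtain ⟨b, hb⟩ := sq_of_cube_eq_sq (by omega) (hi.trans hj.symm)
    have hb1 : 1 ≤ b := by nlinarith
    have hy6 : y = b ^ 6 := by rw [← hi, hb]; ring
    have hx : b ^ 6 ≤ x := by
      rw [← hy6, ← hi]
      calc i ^ 3 ≤ (nrt 3 x) ^ 3 := Nat.pow_le_pow_left hi2 3
      _ ≤ x := nrt_pow_le 3 x (by omega)
    rw [hy6]; exact mem_powSet (by omega) hb1 hx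
  have h1 : (powSet 2 x ∪ powSet 3 x).card ≤ ppCount x := Finset.card_le_card hsub
  have h2 : (powSet 2 x ∩ powSet 3 x).card ≤ nrt 6 x := by
    calc (powSet 2 x ∩ powSet 3 x).card ≤ (powSet 6 x).card := Finset.card_le_card hint
    _ = nrt 6 x := powSet_card 6 x (by omega)
  have h3 := Finset.card_union_add_card_inter (powSet 2 x) (powSet 3 x)
  rw [powSet_card 2 x (by omega), powSet_card 3 x (by omega)] at h3
  omega

lemma count_le (x : ℕ) :
    ppCount x ≤ nrt 2 x + nrt 3 x + nrt 5 x * Nat.log 2 x := by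
  set T : Finset ℕ := ((Finset.Icc 1 (nrt 5 x)) ×ˢ (Finset.Icc 1 (Nat.log 2 x))).image
    (fun q : ℕ × ℕ => q.1 ^ q.2) with hT
  have hsub : (Finset.Icc 1 x).filter IsPerfectPower ⊆ powSet 2 x ∪ powSet 3 x ∪ T := by
    intro N hN
    simp only [Finset.mem_filter, Finset.mem_Icc] at hN
    obtain ⟨⟨hN1, hNx⟩, m, k, hm, hk, rfl⟩ := hN
    rcases eq_or_lt_of_le hm with rfl | hm2
    · -- m = 1
      have : (1:ℕ) ^ k = 1 ^ 2 := by simp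
      rw [this]
      exact Finset.mem_union_left _ (Finset.mem_union_left _
        (mem_powSet (by omega) le_rfl (by simpa using hNx)))
    · set p := k.minFac with hp
      have hpp : p.Prime := Nat.minFac_prime (by omega)
      have hpk : p ∣ k := Nat.minFac_dvd k
      set b := m ^ (k / p) with hbdef
      have hbp : b ^ p = m ^ k := by
        rw [hbdef, ← pow_mul, Nat.div_mul_cancel hpk]
      have hkp1 : 1 ≤ k / p := Nat.one_le_div_iff hpp.pos |>.mpr (Nat.minFac_le (by omega))
      have hb2 : 2 ≤ b := by
        calc 2 = 2 ^ 1 := (pow_one 2).symm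
        _ ≤ m ^ (k / p) := Nat.pow_le_pow_left hm2 _ |>.trans' (Nat.pow_le_pow_right (by omega) hkp1)
      by_cases hp2 : p = 2
      · rw [← hbp, hp2]
        exact Finset.mem_union_left _ (Finset.mem_union_left _
          (mem_powSet (by omega) (by omega) (by rw [hp2] at hbp; omega)))
      · by_cases hp3 : p = 3
        · rw [← hbp, hp3]
          exact Finset.mem_union_left _ (Finset.mem_union_right _
            (mem_powSet (by omega) (by omega) (by rw [hp3] at hbp; omega)))
        · have hp5 : 5 ≤ p := by
            have h2 := hpp.two_le
            have h4 : p ≠ 4 := fun h4 => absurd (h4 ▸ hpp) (by decide)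
            omega
          have hbx : b ^ p ≤ x := by omega
          have hb5 : b ^ 5 ≤ x := le_trans (Nat.pow_le_pow_right (by omega) hp5) hbx
          have h2p : 2 ^ p ≤ x := le_trans (Nat.pow_le_pow_left hb2 p) hbx
          have hplog : p ≤ Nat.log 2 x :=
            (Nat.le_log_iff_pow_le one_lt_two (by omega)).mpr h2p
          refine Finset.mem_union_right _ ?_
          rw [← hbp, hT]
          simp only [Finset.mem_image, Finset.mem_product, Finset.mem_Icc]
          exact ⟨(b, p), ⟨⟨by omega, le_nrt (by omega) hb5⟩, ⟨by omega, hplog⟩⟩, rfl⟩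
  have hTcard : T.card ≤ nrt 5 x * Nat.log 2 x := by
    calc T.card ≤ ((Finset.Icc 1 (nrt 5 x)) ×ˢ (Finset.Icc 1 (Nat.log 2 x))).card :=
      Finset.card_image_le
    _ = nrt 5 x * Nat.log 2 x := by rw [Finset.card_product, Nat.card_Icc, Nat.card_Icc]; simp
  calc ppCount x ≤ (powSet 2 x ∪ powSet 3 x ∪ T).card := Finset.card_le_card hsub
  _ ≤ (powSet 2 x).card + (powSet 3 x).card + T.card :=
      le_trans (Finset.card_union_le _ _) (by
        have := Finset.card_union_le (powSet 2 x) (powSet 3 x); omega)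
  _ ≤ nrt 2 x + nrt 3 x + nrt 5 x * Nat.log 2 x := by
      rw [powSet_card 2 x (by omega), powSet_card 3 x (by omega)]; omega

end Counting
open Real in
lemma le_rpow_inv_of_pow_le {r y : ℝ} {k : ℕ} (hk : 0 < k) (hr : 0 ≤ r)
    (h : r ^ k ≤ y) : r ≤ y ^ ((1:ℝ)/(k:ℝ)) := by
  have hy : 0 ≤ y := le_trans (pow_nonneg hr k) h
  have h1 : r = (r ^ k) ^ ((1:ℝ)/(k:ℝ)) := by
    rw [← Real.rpow_natCast r k, ← Real.rpow_mul hr]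
    rw [mul_one_div, div_self (by exact_mod_cast hk.ne'), Real.rpow_one]
  rw [h1]
  exact Real.rpow_le_rpow (pow_nonneg hr k) h (by positivity)

open Real in
lemma rpow_inv_le_of_le_pow {r y : ℝ} {k : ℕ} (hk : 0 < k) (hr : 0 ≤ r) (hy : 0 ≤ y)
    (h : y ≤ r ^ k) : y ^ ((1:ℝ)/(k:ℝ)) ≤ r := by
  have h1 : r = (r ^ k) ^ ((1:ℝ)/(k:ℝ)) := by
    rw [← Real.rpow_natCast r k, ← Real.rpow_mul hr]
    rw [mul_one_div, div_self (by exact_mod_cast hk.ne'), Real.rpow_one]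
  rw [h1]
  exact Real.rpow_le_rpow hy h (by positivity)

lemma nrt_cast_le (k x : ℕ) (hk : 0 < k) : (nrt k x : ℝ) ≤ (x:ℝ) ^ ((1:ℝ)/(k:ℝ)) := by
  apply le_rpow_inv_of_pow_le hk (by positivity)
  exact_mod_cast nrt_pow_le k x hk

lemma rpow_le_nrt_cast (k x : ℕ) (hk : 0 < k) :
    (x:ℝ) ^ ((1:ℝ)/(k:ℝ)) ≤ (nrt k x : ℝ) + 1 := by
  apply rpow_inv_le_of_le_pow hk (by positivity) (by positivity)
  have := (lt_nrt_succ_pow k x hk).le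
  exact_mod_cast this

lemma natLog_cast_le {x : ℕ} (hx : 1 ≤ x) : (Nat.log 2 x : ℝ) ≤ Real.logb 2 x := by
  rcases Nat.eq_zero_or_pos (Nat.log 2 x) with h0 | h0
  · rw [h0]
    push_cast
    exact Real.logb_nonneg one_lt_two (by exact_mod_cast hx)
  · have h1 : (2:ℕ) ^ Nat.log 2 x ≤ x := Nat.pow_log_le_self 2 (by omega)
    have h2 : ((2:ℝ)) ^ (Nat.log 2 x) ≤ (x:ℝ) := by exact_mod_cast h1
    calc (Nat.log 2 x : ℝ) = Real.logb 2 ((2:ℝ) ^ (Nat.log 2 x)) := by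
          rw [Real.logb_pow, Real.logb_self_eq_one (by norm_num)]; ring
    _ ≤ Real.logb 2 x := Real.logb_le_logb_of_le one_lt_two (by positivity) h2

lemma master (x n : ℕ) (hx : 1 ≤ x)
    (hlo : nrt 2 x + nrt 3 x ≤ n + nrt 6 x)
    (hhi : n ≤ nrt 2 x + nrt 3 x + nrt 5 x * Nat.log 2 x) :
    |(x:ℝ) ^ ((1:ℝ)/2) + (x:ℝ) ^ ((1:ℝ)/3) - (n:ℝ)| ≤
      (x:ℝ) ^ ((1:ℝ)/6) + (x:ℝ) ^ ((1:ℝ)/5) * Real.logb 2 x + 2 := by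
  have c2 := nrt_cast_le 2 x (by norm_num)
  have c3 := nrt_cast_le 3 x (by norm_num)
  have c5 := nrt_cast_le 5 x (by norm_num)
  have c6 := nrt_cast_le 6 x (by norm_num)
  have d2 := rpow_le_nrt_cast 2 x (by norm_num)
  have d3 := rpow_le_nrt_cast 3 x (by norm_num)
  have clog := natLog_cast_le hx
  have hlogn : (0:ℝ) ≤ (Nat.log 2 x : ℝ) := by positivity
  have hlo' : (nrt 2 x : ℝ) + (nrt 3 x : ℝ) ≤ (n : ℝ) + (nrt 6 x : ℝ) := by exact_mod_cast hlo
  have hhi' : (n : ℝ) ≤ (nrt 2 x : ℝ) + (nrt 3 x : ℝ) + (nrt 5 x : ℝ) * (Nat.log 2 x : ℝ) := by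
    exact_mod_cast hhi
  have h5 : (nrt 5 x : ℝ) * (Nat.log 2 x : ℝ) ≤ (x:ℝ) ^ ((1:ℝ)/5) * Real.logb 2 x := by
    apply mul_le_mul c5 clog hlogn (by positivity)
  rw [abs_le]
  constructor
  · nlinarith
  · nlinarith
open Filter Real in
lemma Ebound : ∀ᶠ y : ℝ in atTop,
    y ^ ((1:ℝ)/6) + y ^ ((1:ℝ)/5) * Real.logb 2 y + 2 ≤ y ^ ((1:ℝ)/4) := by
  have e1 : Tendsto (fun y : ℝ => y ^ ((1:ℝ)/6) / y ^ ((1:ℝ)/4)) atTop (nhds 0) := by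
    apply Filter.Tendsto.congr' _ (tendsto_rpow_neg_atTop (by norm_num : (0:ℝ) < 1/12))
    filter_upwards [eventually_gt_atTop (0:ℝ)] with y hy
    rw [← Real.rpow_sub hy]
    norm_num
  have e2 : Tendsto (fun y : ℝ => y ^ ((1:ℝ)/5) * Real.logb 2 y / y ^ ((1:ℝ)/4))
      atTop (nhds 0) := by
    have base : Tendsto (fun y : ℝ => Real.log y / y ^ ((1:ℝ)/20) * (1 / Real.log 2))
        atTop (nhds 0) := by
      have h := (isLittleO_log_rpow_atTop
        (by norm_num : (0:ℝ) < 1/20)).tendsto_div_nhds_zero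
      simpa using h.mul_const (1 / Real.log 2)
    apply Filter.Tendsto.congr' _ base
    filter_upwards [eventually_gt_atTop (0:ℝ)] with y hy
    have h20 : y ^ ((1:ℝ)/4) = y ^ ((1:ℝ)/5) * y ^ ((1:ℝ)/20) := by
      rw [← Real.rpow_add hy]; norm_num
    rw [Real.logb, h20]
    have h5 : y ^ ((1:ℝ)/5) ≠ 0 := ne_of_gt (Real.rpow_pos_of_pos hy _)
    have h20' : y ^ ((1:ℝ)/20) ≠ 0 := ne_of_gt (Real.rpow_pos_of_pos hy _)
    have hl2 : Real.log 2 ≠ 0 := by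
      exact ne_of_gt (Real.log_pos one_lt_two)
    field_simp
  have e3 : Tendsto (fun y : ℝ => 2 / y ^ ((1:ℝ)/4)) atTop (nhds 0) :=
    tendsto_const_nhds.div_atTop (tendsto_rpow_atTop (by norm_num))
  have hf : Tendsto (fun y : ℝ =>
      (y ^ ((1:ℝ)/6) + y ^ ((1:ℝ)/5) * Real.logb 2 y + 2) / y ^ ((1:ℝ)/4))
      atTop (nhds 0) := by
    have := (e1.add e2).add e3
    simp only [add_zero] at this
    apply this.congr
    intro y
    ring
  filter_upwards [hf.eventually_lt_const one_pos, eventually_ge_atTop (1:ℝ)] with y h1 h2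
  have hy0 : (0:ℝ) < y := by linarith
  have hy4 : (0:ℝ) < y ^ ((1:ℝ)/4) := Real.rpow_pos_of_pos hy0 _
  calc y ^ ((1:ℝ)/6) + y ^ ((1:ℝ)/5) * Real.logb 2 y + 2
      = (y ^ ((1:ℝ)/6) + y ^ ((1:ℝ)/5) * Real.logb 2 y + 2) / y ^ ((1:ℝ)/4)
        * y ^ ((1:ℝ)/4) := by field_simp
  _ ≤ 1 * y ^ ((1:ℝ)/4) := mul_le_mul_of_nonneg_right h1.le hy4.le
  _ = y ^ ((1:ℝ)/4) := one_mul _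
lemma chain {u x s c e : ℝ} (hu : 10 ≤ u)
    (hs : s ^ 2 = x) (hc : c ^ 3 = x) (he : e ^ 4 = x)
    (hs0 : 0 ≤ s) (hc0 : 0 ≤ c) (he0 : 0 ≤ e)
    (hm1 : s + c - u ^ 6 ≤ e) (hm2 : u ^ 6 - (s + c) ≤ e) :
    |x - u ^ 12 + 2 * u ^ 10| ≤ 7 * u ^ 9 := by
  have hu0 : (0:ℝ) < u := by linarith
  have hu2 : (100:ℝ) ≤ u ^ 2 := by nlinarith
  have h32 : 10 * u ^ 2 ≤ u ^ 3 := by nlinarith [pow_nonneg hu0.le 2]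
  have h43 : 10 * u ^ 3 ≤ u ^ 4 := by nlinarith [pow_nonneg hu0.le 3]
  have h64 : 100 * u ^ 4 ≤ u ^ 6 := by nlinarith [pow_nonneg hu0.le 4]
  have h109 : 10 * u ^ 9 ≤ u ^ 10 := by nlinarith [pow_nonneg hu0.le 9]
  have h108 : 100 * u ^ 8 ≤ u ^ 10 := by nlinarith [pow_nonneg hu0.le 8]
  have h98 : 10 * u ^ 8 ≤ u ^ 9 := by nlinarith [pow_nonneg hu0.le 8]
  have hx0 : 0 ≤ x := hs ▸ sq_nonneg s
  have he2 : e ^ 2 = s := by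
    have h1 : (e ^ 2) ^ 2 = s ^ 2 := by rw [hs, ← he]; ring
    rcases sq_eq_sq_iff_eq_or_eq_neg.mp h1 with h | h
    · exact h
    · linarith [sq_nonneg e, hs0, h]
  have hse : s ≤ u ^ 6 + e := by linarith
  have hEU : (0:ℝ) ≤ e + u ^ 3 := by positivity
  -- Step 1 : e ≤ u^3 + 1
  have hes : e ≤ u ^ 3 + 1 := by nlinarith [hEU, he2, hse, pow_nonneg hu0.le 3]
  -- Step 2 : s ≤ u^6 + 2u^3
  have hs_up : s ≤ u ^ 6 + 2 * u ^ 3 := by linarith [h32, hu2, pow_nonneg hu0.le 2]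
  -- Step 3 : c ≤ u^4 + 3u^2
  have hc_up : c ≤ u ^ 4 + 3 * u ^ 2 := by
    have h1 : s ^ 2 ≤ (u ^ 6 + 2 * u ^ 3) ^ 2 := by
      have := mul_le_mul hs_up hs_up hs0 (by positivity : (0:ℝ) ≤ u ^ 6 + 2 * u ^ 3)
      linarith [this]
    have h2 : c ^ 3 ≤ (u ^ 4 + 3 * u ^ 2) ^ 3 := by
      linarith [h1, h109, pow_nonneg hu0.le 9, pow_nonneg hu0.le 8, pow_nonneg hu0.le 6]
    exact le_of_pow_le_pow_left₀ (by norm_num) (by positivity) h2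
  -- Step 4 : s ≥ u^6 - 2u^4
  have hs_lo1 : u ^ 6 - 2 * u ^ 4 ≤ s := by linarith [hm2, hc_up, hes, h43, h32, hu2]
  -- Step 5 : x ≥ u^12 - 4u^10
  have hA0 : (0:ℝ) ≤ u ^ 6 - 2 * u ^ 4 := by linarith [h64, pow_nonneg hu0.le 4]
  have hx_lo : u ^ 12 - 4 * u ^ 10 ≤ x := by
    have h1 : (u ^ 6 - 2 * u ^ 4) ^ 2 ≤ s ^ 2 :=
      mul_self_le_mul_self hA0 hs_lo1 |>.trans_eq (by ring) |>.trans_eq' (by ring)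
    linarith [h1, pow_nonneg hu0.le 8]
  -- Step 6 : c ≥ u^4 - 2u^2
  have hc_lo : u ^ 4 - 2 * u ^ 2 ≤ c := by
    have h1 : (u ^ 4 - 2 * u ^ 2) ^ 3 ≤ c ^ 3 := by
      linarith [hx_lo, h108, pow_nonneg hu0.le 8, pow_nonneg hu0.le 6]
    exact le_of_pow_le_pow_left₀ (by norm_num) hc0 h1
  -- Step 7 : |s - (u^6 - u^4)| ≤ 2u^3
  have hs_hi2 : s ≤ u ^ 6 - u ^ 4 + 2 * u ^ 3 := by linarith [hm1, hc_lo, hes, h32, hu2]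
  have hs_lo2 : u ^ 6 - u ^ 4 - 2 * u ^ 3 ≤ s := by linarith [hm2, hc_up, hes, h32, hu2]
  -- Final
  set A := u ^ 6 - u ^ 4 with hA
  have hA0' : (0:ℝ) ≤ A := by rw [hA]; linarith [h64, pow_nonneg hu0.le 4]
  have habs : |s - A| ≤ 2 * u ^ 3 := abs_le.mpr ⟨by rw [hA]; linarith, by rw [hA]; linarith⟩
  have hsum : s + A ≤ 2 * u ^ 6 := by rw [hA]; linarith [hs_hi2, h43]
  have h1 : |x - A ^ 2| ≤ 2 * u ^ 3 * (2 * u ^ 6) := by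
    have heq : x - A ^ 2 = (s - A) * (s + A) := by rw [← hs]; ring
    rw [heq, abs_mul, abs_of_nonneg (by linarith : (0:ℝ) ≤ s + A)]
    exact mul_le_mul habs hsum (by linarith) (by positivity)
  have heq2 : x - u ^ 12 + 2 * u ^ 10 = (x - A ^ 2) + u ^ 8 := by rw [hA]; ring
  calc |x - u ^ 12 + 2 * u ^ 10| ≤ |x - A ^ 2| + |u ^ 8| := by rw [heq2]; exact abs_add_le _ _
  _ ≤ 2 * u ^ 3 * (2 * u ^ 6) + u ^ 8 := by
      rw [abs_of_nonneg (pow_nonneg hu0.le 8)]; linarith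
  _ ≤ 7 * u ^ 9 := by linarith [h98, pow_nonneg hu0.le 8]
lemma rpow_one_div_pow' (x : ℝ) (hx : 0 ≤ x) (k m : ℕ) :
    (x ^ ((1:ℝ)/(k:ℝ))) ^ m = x ^ ((m:ℝ)/(k:ℝ)) := by
  rw [← Real.rpow_natCast (x ^ ((1:ℝ)/(k:ℝ))) m, ← Real.rpow_mul hx]
  congr 1
  ring

theorem nth_perfect_power_asymptotic (a : ℕ → ℕ)
    (hmono : ∀ m n : ℕ, 1 ≤ m → m < n → a m < a n)
    (hrange : ∀ N : ℕ, IsPerfectPower N ↔ ∃ n : ℕ, 1 ≤ n ∧ a n = N) :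
    ∀ ε : ℝ, 0 < ε → ∃ N : ℕ, ∀ n : ℕ, N ≤ n →
      |(a n : ℝ) - (n : ℝ)^2 + 2 * (n : ℝ)^((5 : ℝ)/3)| ≤ ε * (n : ℝ)^((5 : ℝ)/3) := by
  intro ε hε
  have hle : ∀ n : ℕ, 1 ≤ n → n ≤ a n := by
    intro n hn
    induction n with
    | zero => omega
    | succ m ih =>
      rcases Nat.eq_zero_or_pos m with rfl | hm
      · exact a_pos a hrange le_rfl
      · have h1 := hmono m (m+1) hm (Nat.lt_succ_self m)
        have h2 := ih hm
        omega
  have hta : Filter.Tendsto (fun n : ℕ => (a n : ℝ)) Filter.atTop Filter.atTop := by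
    apply Filter.tendsto_atTop_mono' _ _ tendsto_natCast_atTop_atTop
    filter_upwards [Filter.eventually_ge_atTop 1] with n hn
    exact_mod_cast hle n hn
  have hEa := hta.eventually Ebound
  have hu_big : Filter.Tendsto (fun n : ℕ => (n:ℝ) ^ ((1:ℝ)/6)) Filter.atTop Filter.atTop :=
    (tendsto_rpow_atTop (by norm_num)).comp tendsto_natCast_atTop_atTop
  have hεbound := hu_big.eventually_ge_atTop (max 10 (7/ε))
  have hev : ∀ᶠ n : ℕ in Filter.atTop,
      |(a n : ℝ) - (n : ℝ)^2 + 2 * (n : ℝ)^((5 : ℝ)/3)| ≤ ε * (n : ℝ)^((5 : ℝ)/3) := by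
    filter_upwards [hEa, hεbound, Filter.eventually_ge_atTop 1] with n hE hub hn1
    set x := a n with hxdef
    have hx1 : 1 ≤ x := a_pos a hrange hn1
    have hx0 : (0:ℝ) ≤ (x:ℝ) := by positivity
    have hn0 : (0:ℝ) ≤ (n:ℝ) := by positivity
    have hlo := count_ge x
    have hhi := count_le x
    rw [hxdef, count_a_eq a hmono hrange hn1] at hlo hhi
    have hmaster := master x n hx1 hlo hhi
    set u := (n:ℝ) ^ ((1:ℝ)/6) with hudef
    set s := (x:ℝ) ^ ((1:ℝ)/2) with hsdef
    set c := (x:ℝ) ^ ((1:ℝ)/3) with hcdef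
    set e := (x:ℝ) ^ ((1:ℝ)/4) with hedef
    have hu10 : 10 ≤ u := le_trans (le_max_left _ _) hub
    have hs2 : s ^ 2 = (x:ℝ) := by
      rw [hsdef, show ((1:ℝ)/2) = (1:ℝ)/((2:ℕ):ℝ) by norm_num, rpow_one_div_pow' _ hx0 2 2,
        show ((2:ℕ):ℝ)/((2:ℕ):ℝ) = 1 by norm_num, Real.rpow_one]
    have hc3 : c ^ 3 = (x:ℝ) := by
      rw [hcdef, show ((1:ℝ)/3) = (1:ℝ)/((3:ℕ):ℝ) by norm_num, rpow_one_div_pow' _ hx0 3 3,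
        show ((3:ℕ):ℝ)/((3:ℕ):ℝ) = 1 by norm_num, Real.rpow_one]
    have he4 : e ^ 4 = (x:ℝ) := by
      rw [hedef, show ((1:ℝ)/4) = (1:ℝ)/((4:ℕ):ℝ) by norm_num, rpow_one_div_pow' _ hx0 4 4,
        show ((4:ℕ):ℝ)/((4:ℕ):ℝ) = 1 by norm_num, Real.rpow_one]
    have hu6 : u ^ 6 = (n:ℝ) := by
      rw [hudef, show ((1:ℝ)/6) = (1:ℝ)/((6:ℕ):ℝ) by norm_num, rpow_one_div_pow' _ hn0 6 6,
        show ((6:ℕ):ℝ)/((6:ℕ):ℝ) = 1 by norm_num, Real.rpow_one]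
    have hu10' : u ^ 10 = (n:ℝ) ^ ((5:ℝ)/3) := by
      rw [hudef, show ((1:ℝ)/6) = (1:ℝ)/((6:ℕ):ℝ) by norm_num, rpow_one_div_pow' _ hn0 6 10]
      congr 1
      norm_num
    have hu12 : u ^ 12 = (n:ℝ) ^ 2 := by
      rw [hudef, show ((1:ℝ)/6) = (1:ℝ)/((6:ℕ):ℝ) by norm_num, rpow_one_div_pow' _ hn0 6 12,
        show ((12:ℕ):ℝ)/((6:ℕ):ℝ) = ((2:ℕ):ℝ) by norm_num, Real.rpow_natCast]
    have hm : |s + c - (n:ℝ)| ≤ e := le_trans hmaster hE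
    obtain ⟨hm2', hm1'⟩ := abs_le.mp hm
    have habs := chain hu10 hs2 hc3 he4 (by positivity) (by positivity) (by positivity)
      (by rw [hu6]; linarith) (by rw [hu6]; linarith)
    rw [hu12, hu10'] at habs
    have hu9 : (0:ℝ) ≤ u ^ 9 := by positivity
    have h7 : 7 ≤ u * ε := (div_le_iff₀ hε).mp (le_trans (le_max_right _ _) hub)
    calc |(x:ℝ) - (n:ℝ) ^ 2 + 2 * (n:ℝ) ^ ((5:ℝ)/3)| ≤ 7 * u ^ 9 := habs
    _ ≤ ε * u ^ 10 := by nlinarith [hu9, h7]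
    _ = ε * (n:ℝ) ^ ((5:ℝ)/3) := by rw [hu10']
  rw [Filter.eventually_atTop] at hev
  exact hev
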